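/- Spreading lemma: let f₁,…,f_k: V → ℝ be l²(V,μ)-orthonormal functions on a weighted finite graph and let F(v) = (f₁(v),…,f_k(v)). If 0 < r < 1 and S ⊆ V satisfies d̄_F(u,v) ≤ r for all u,v ∈ S ∩ supp(F), then ℰ_S ≤ ℰ_V / (k(1 − r²)). -/

import Mathlib

open Finset

namespace DualCheeger

variable {N : ℕ}

/-- The degree of a vertex `u`: `d_u = ∑_v w u v`. -/
def degree (w : Fin N → Fin N → ℝ) (u : Fin N) : ℝ := ∑ v, w u v

/-- A weighted finite graph structure on `Fin N`: symmetric nonnegative weights,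
no self-loops, and strictly positive degrees. -/
def IsWeightedGraph (w : Fin N → Fin N → ℝ) : Prop :=
  (∀ u v, w u v = w v u) ∧ (∀ u v, 0 ≤ w u v) ∧ (∀ u, w u u = 0) ∧
    ∀ u, 0 < degree w u

/-- `|E(A,B)| = ∑_{u ∈ A} ∑_{v ∈ B} w u v`. -/
def Ew (w : Fin N → Fin N → ℝ) (A B : Finset (Fin N)) : ℝ :=
  ∑ u ∈ A, ∑ v ∈ B, w u v

/-- `vol(A) = ∑_{u ∈ A} d_u`. -/
def vol (w : Fin N → Fin N → ℝ) (A : Finset (Fin N)) : ℝ := ∑ u ∈ A, degree w u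

/-- The expansion `φ(S) = |E(S, Sᶜ)| / vol(S)`. -/
noncomputable def expansion (w : Fin N → Fin N → ℝ) (S : Finset (Fin N)) : ℝ :=
  Ew w S Sᶜ / vol w S

/-- `φ̄(V₁,V₂) = 2|E(V₁,V₂)| / vol(V₁ ∪ V₂)`. -/
noncomputable def phibar (w : Fin N → Fin N → ℝ) (V₁ V₂ : Finset (Fin N)) : ℝ :=
  2 * Ew w V₁ V₂ / vol w (V₁ ∪ V₂)

/-- A `k`-subpartition: `k` nonempty pairwise disjoint subsets. -/
def IsSubpartition (k : ℕ) (P : Fin k → Finset (Fin N)) : Prop :=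
  (∀ i, (P i).Nonempty) ∧ ∀ i j, i ≠ j → Disjoint (P i) (P j)

/-- The `k`-way Cheeger constant `h(k)`. -/
noncomputable def cheeger (w : Fin N → Fin N → ℝ) (k : ℕ) : ℝ :=
  sInf { x | ∃ P : Fin k → Finset (Fin N), IsSubpartition k P ∧
    x = ⨆ i, expansion w (P i) }

/-- A `k`-sub-bipartition: `k` pairs of subsets, all `2k` subsets pairwise
disjoint, with each union `V_{2i-1} ∪ V_{2i}` nonempty. -/
def IsSubBipartition (k : ℕ) (P : Fin k → Finset (Fin N) × Finset (Fin N)) : Prop :=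
  (∀ i, Disjoint (P i).1 (P i).2) ∧
    (∀ i j, i ≠ j → Disjoint ((P i).1 ∪ (P i).2) ((P j).1 ∪ (P j).2)) ∧
    ∀ i, ((P i).1 ∪ (P i).2).Nonempty

/-- The `k`-way dual Cheeger constant `h̄(k)`. -/
noncomputable def dualCheeger (w : Fin N → Fin N → ℝ) (k : ℕ) : ℝ :=
  sSup { x | ∃ P : Fin k → Finset (Fin N) × Finset (Fin N), IsSubBipartition k P ∧
    x = ⨅ i, phibar w (P i).1 (P i).2 }

/-- `lam` enumerates the eigenvalues of the normalized Laplacian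
`Δ f (u) = f u - d_u⁻¹ ∑_v w u v * f v` in nondecreasing order with multiplicity,
witnessed by a `μ`-orthonormal eigenbasis `f`. -/
def IsLapEigenbasis (w : Fin N → Fin N → ℝ) (lam : Fin N → ℝ)
    (f : Fin N → Fin N → ℝ) : Prop :=
  Monotone lam ∧
    (∀ i j, (∑ u, degree w u * f i u * f j u) = if i = j then (1 : ℝ) else 0) ∧
    ∀ i u, f i u - (degree w u)⁻¹ * ∑ v, w u v * f i v = lam i * f i u

/-- The dual Rayleigh quotient of a function `f : V → ℝ`. -/
noncomputable def dualRayleigh (w : Fin N → Fin N → ℝ) (f : Fin N → ℝ) : ℝ :=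
  (1 / 2 * ∑ u, ∑ v, w u v * (f u + f v) ^ 2) / ∑ u, degree w u * f u ^ 2

/-- The dual Rayleigh quotient of a map `F : V → ℝ^k`. -/
noncomputable def dualRayleighVec (w : Fin N → Fin N → ℝ) {k : ℕ}
    (F : Fin N → EuclideanSpace ℝ (Fin k)) : ℝ :=
  (1 / 2 * ∑ u, ∑ v, w u v * ‖F u + F v‖ ^ 2) / ∑ u, degree w u * ‖F u‖ ^ 2

/-- The rough projective-space distance `d̄_F` between (the projections of)
`F u` and `F v`. -/
noncomputable def dbar {k : ℕ} (F : Fin N → EuclideanSpace ℝ (Fin k))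
    (u v : Fin N) : ℝ :=
  min ‖‖F u‖⁻¹ • F u - ‖F v‖⁻¹ • F v‖ ‖‖F u‖⁻¹ • F u + ‖F v‖⁻¹ • F v‖

/-- The `l²` mass of `F` on `S`: `ℰ_S = ∑_{u ∈ S} d_u ‖F u‖²`. -/
noncomputable def mass (w : Fin N → Fin N → ℝ) {k : ℕ}
    (F : Fin N → EuclideanSpace ℝ (Fin k)) (S : Finset (Fin N)) : ℝ :=
  ∑ u ∈ S, degree w u * ‖F u‖ ^ 2

/-- The distance `d̄_F(v, T)` from a vertex to a set. -/
noncomputable def dbarSet {k : ℕ} (F : Fin N → EuclideanSpace ℝ (Fin k))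
    (v : Fin N) (T : Set (Fin N)) : ℝ :=
  sInf { x | ∃ t ∈ T, x = dbar F v t }

/-- The modified dual Cheeger constant `h̄*(k)`. -/
noncomputable def dualCheegerStar (w : Fin N → Fin N → ℝ) (k : ℕ) : ℝ :=
  sSup { x | ∃ P : Fin k → Finset (Fin N) × Finset (Fin N), IsSubBipartition k P ∧
    x = ⨅ i, (2 * Ew w (P i).1 (P i).2 + 1 / 2 * Ew w ((P i).1 ∪ (P i).2)
        (Finset.univ \ Finset.univ.biUnion (fun j => (P j).1 ∪ (P j).2))) /
      vol w ((P i).1 ∪ (P i).2) }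

/-- `G` is bipartite: `V = A ∪ Aᶜ` with no edges inside `A` nor inside `Aᶜ`. -/
def IsBipartite (w : Fin N → Fin N → ℝ) : Prop :=
  ∃ A : Finset (Fin N), (∀ u ∈ A, ∀ v ∈ A, w u v = 0) ∧
    ∀ u ∈ Aᶜ, ∀ v ∈ Aᶜ, w u v = 0

/-- The equivalence relation generated by adjacency (connected components). -/
def Reach (w : Fin N → Fin N → ℝ) : Fin N → Fin N → Prop :=
  Relation.EqvGen fun u v => 0 < w u v

/-- `w` is the weight function of a weighted cycle on `Fin N`: symmetric,
nonnegative, and positive exactly on consecutive vertices mod `N`. -/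
def IsCycleWeight (N : ℕ) (w : Fin N → Fin N → ℝ) : Prop :=
  (∀ u v, w u v = w v u) ∧ (∀ u v, 0 ≤ w u v) ∧
    ∀ i j : Fin N, 0 < w i j ↔ ((i.val + 1) % N = j.val ∨ (j.val + 1) % N = i.val)

/-- The unweighted cycle on `Fin N`. -/
noncomputable def cycleWeight (N : ℕ) : Fin N → Fin N → ℝ := fun i j =>
  if (i.val + 1) % N = j.val ∨ (j.val + 1) % N = i.val then 1 else 0

/-- Lemma 5.2 (spreading lemma): if `S ∩ supp F` has `d̄_F`-diameter at most
`r < 1`, then `ℰ_S ≤ ℰ_V / (k (1 - r²))`. -/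
theorem spreading_lemma {N k : ℕ} (w : Fin N → Fin N → ℝ)
    (hG : IsWeightedGraph w) (f : Fin k → Fin N → ℝ)
    (horth : ∀ i j, (∑ u, degree w u * f i u * f j u) = if i = j then (1 : ℝ) else 0)
    (F : Fin N → EuclideanSpace ℝ (Fin k)) (hF : ∀ v i, F v i = f i v)
    (r : ℝ) (hr0 : 0 < r) (hr1 : r < 1) (S : Finset (Fin N))
    (hdiam : ∀ u ∈ S, F u ≠ 0 → ∀ v ∈ S, F v ≠ 0 → dbar F u v ≤ r) :
    mass w F S ≤ mass w F Finset.univ / (k * (1 - r ^ 2)) := by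
  obtain ⟨hsym, hnn, hloop, hdeg⟩ := hG
  have hr2 : 0 < 1 - r ^ 2 := by nlinarith
  have hmassnn : ∀ T : Finset (Fin N), 0 ≤ mass w F T := by
    intro T
    apply Finset.sum_nonneg
    intro u _
    exact mul_nonneg (hdeg u).le (sq_nonneg _)
  have hinner : ∀ (x y : EuclideanSpace ℝ (Fin k)),
      (inner ℝ x y : ℝ) = ∑ i, x i * y i := by
    intro x y
    simp [PiLp.inner_apply, RCLike.inner_apply, conj_trivial, mul_comm]
  by_cases hS : ∃ v₀ ∈ S, F v₀ ≠ 0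
  · obtain ⟨v₀, hv₀S, hv₀⟩ := hS
    have hk : 0 < k := by
      by_contra hkc
      push_neg at hkc
      interval_cases k
      exact hv₀ (by ext i; exact i.elim0)
    -- mass of univ is k
    have hnormsq : ∀ u, ‖F u‖ ^ 2 = ∑ i, f i u * f i u := by
      intro u
      rw [← real_inner_self_eq_norm_sq, hinner]
      exact Finset.sum_congr rfl fun i _ => by rw [hF]
    have hmassV : mass w F Finset.univ = k := by
      unfold mass
      calc ∑ u, degree w u * ‖F u‖ ^ 2
          = ∑ u, ∑ i, degree w u * f i u * f i u := by
            refine Finset.sum_congr rfl fun u _ => ?_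
            rw [hnormsq, Finset.mul_sum]
            exact Finset.sum_congr rfl fun i _ => by ring
        _ = ∑ i : Fin k, ∑ u, degree w u * f i u * f i u := Finset.sum_comm
        _ = ∑ i : Fin k, (1 : ℝ) := by
            refine Finset.sum_congr rfl fun i _ => ?_
            rw [horth i i]
            simp
        _ = k := by simp
    set ψ : EuclideanSpace ℝ (Fin k) := ‖F v₀‖⁻¹ • F v₀ with hψ
    have hψnorm : ‖ψ‖ = 1 := norm_smul_inv_norm hv₀
    have hsum : ∑ u, degree w u * (inner ℝ (F u) ψ : ℝ) ^ 2 = 1 := by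
      have h1 : ∀ u, (inner ℝ (F u) ψ : ℝ) = ∑ i, f i u * ψ i := by
        intro u
        rw [hinner]
        exact Finset.sum_congr rfl fun i _ => by rw [hF]
      calc ∑ u, degree w u * (inner ℝ (F u) ψ : ℝ) ^ 2
          = ∑ u, ∑ i, ∑ j, ψ i * ψ j * (degree w u * f i u * f j u) := by
            refine Finset.sum_congr rfl fun u _ => ?_
            rw [h1, sq, Finset.sum_mul_sum, Finset.mul_sum]
            refine Finset.sum_congr rfl fun i _ => ?_
            rw [Finset.mul_sum]
            exact Finset.sum_congr rfl fun j _ => by ring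
        _ = ∑ i : Fin k, ∑ u, ∑ j, ψ i * ψ j * (degree w u * f i u * f j u) :=
            Finset.sum_comm
        _ = ∑ i : Fin k, ∑ j, ∑ u, ψ i * ψ j * (degree w u * f i u * f j u) := by
            exact Finset.sum_congr rfl fun i _ => Finset.sum_comm
        _ = ∑ i : Fin k, ∑ j, ψ i * ψ j * (if i = j then (1:ℝ) else 0) := by
            refine Finset.sum_congr rfl fun i _ => Finset.sum_congr rfl fun j _ => ?_
            rw [← horth i j, Finset.mul_sum]
        _ = ∑ i : Fin k, ψ i * ψ i := by
            refine Finset.sum_congr rfl fun i _ => ?_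
            simp
        _ = 1 := by
            rw [← hinner ψ ψ, real_inner_self_eq_norm_sq, hψnorm]
            norm_num
    have hpt : ∀ u ∈ S, (1 - r ^ 2) * ‖F u‖ ^ 2 ≤ (inner ℝ (F u) ψ : ℝ) ^ 2 := by
      intro u huS
      by_cases hu : F u = 0
      · simp [hu]
      · have hd := hdiam u huS hu v₀ hv₀S hv₀
        unfold dbar at hd
        set a : EuclideanSpace ℝ (Fin k) := ‖F u‖⁻¹ • F u with hadef
        have ha : ‖a‖ = 1 := norm_smul_inv_norm hu
        set t : ℝ := inner ℝ a ψ with ht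
        have habs : 1 - r ^ 2 / 2 ≤ |t| := by
          rcases min_le_iff.mp hd with h | h
          · have h2 : ‖a - ψ‖ ^ 2 ≤ r ^ 2 := by nlinarith [norm_nonneg (a - ψ)]
            have h3 : ‖a - ψ‖ ^ 2 = 2 - 2 * t := by
              rw [norm_sub_sq_real, ha, hψnorm, ← ht]
              ring
            have : 1 - r ^ 2 / 2 ≤ t := by linarith
            exact this.trans (le_abs_self t)
          · have h2 : ‖a + ψ‖ ^ 2 ≤ r ^ 2 := by nlinarith [norm_nonneg (a + ψ)]
            have h3 : ‖a + ψ‖ ^ 2 = 2 + 2 * t := by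
              rw [norm_add_sq_real, ha, hψnorm, ← ht]
              ring
            have : 1 - r ^ 2 / 2 ≤ -t := by linarith
            exact this.trans (neg_le_abs t)
        have ht2 : 1 - r ^ 2 ≤ t ^ 2 := by
          nlinarith [sq_abs t, abs_nonneg t, sq_nonneg (r ^ 2)]
        have hFu : (inner ℝ (F u) ψ : ℝ) = ‖F u‖ * t := by
          have hsm : (‖F u‖ : ℝ) • a = F u := by
            rw [hadef, smul_smul, mul_inv_cancel₀ (norm_ne_zero_iff.mpr hu), one_smul]
          rw [ht]
          conv_lhs => rw [← hsm]
          rw [real_inner_smul_left]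
        rw [hFu]
        nlinarith [ht2, sq_nonneg ‖F u‖]
    have hchain : (1 - r ^ 2) * mass w F S ≤ 1 := by
      have h1 : (1 - r ^ 2) * mass w F S
          ≤ ∑ u ∈ S, degree w u * (inner ℝ (F u) ψ : ℝ) ^ 2 := by
        unfold mass
        rw [Finset.mul_sum]
        refine Finset.sum_le_sum fun u hu => ?_
        calc (1 - r ^ 2) * (degree w u * ‖F u‖ ^ 2)
            = degree w u * ((1 - r ^ 2) * ‖F u‖ ^ 2) := by ring
          _ ≤ degree w u * (inner ℝ (F u) ψ : ℝ) ^ 2 :=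
              mul_le_mul_of_nonneg_left (hpt u hu) (hdeg u).le
      have h2 : ∑ u ∈ S, degree w u * (inner ℝ (F u) ψ : ℝ) ^ 2
          ≤ ∑ u, degree w u * (inner ℝ (F u) ψ : ℝ) ^ 2 :=
        Finset.sum_le_sum_of_subset_of_nonneg (Finset.subset_univ S)
          (fun u _ _ => mul_nonneg (hdeg u).le (sq_nonneg _))
      linarith [hsum]
    have hknn : (0 : ℝ) < k := by exact_mod_cast hk
    rw [hmassV, le_div_iff₀ (by positivity)]
    nlinarith [hchain, hmassnn S]
  · push_neg at hS
    have h0 : mass w F S = 0 :=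
      Finset.sum_eq_zero fun u hu => by simp [hS u hu]
    rw [h0]
    apply div_nonneg (hmassnn _)
    exact mul_nonneg (Nat.cast_nonneg k) hr2.le

end DualCheeger
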